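/- Suppose τ : ℤ^D → 𝕋 is an injective group homomorphism with dense image. Let 𝒫 be a simple 𝒜-labelled measurable partition of 𝕋. Then the trajectory map 𝒫_σ is injective modulo null sets in the following sense: for every s ∈ 𝕋 with s ≠ 0, for λ-almost every t ∈ 𝕋̃(𝒫) with t + s ∈ 𝕋̃(𝒫), there exists ℓ ∈ ℤ^D with 𝒫(σ^ℓ(t)) ≠ 𝒫(σ^ℓ(t) + s); that is, 𝒫_σ(t) ≠ 𝒫_σ(t + s). -/

import Mathlib

open MeasureTheory Filter Topology
open scoped ENNReal

noncomputable section

/-- The `K`-dimensional torus `𝕋 = (ℝ/ℤ)^K`, with its (sup) quotient metric `d`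
and Haar (Lebesgue) probability measure `volume`. -/
abbrev Torus (K : ℕ) := Fin K → AddCircle (1 : ℝ)

/-- The lattice `𝕃 = ℤ^D`. -/
abbrev Zd (D : ℕ) := Fin D → ℤ

/-- The box `𝔹(N) = {-N,…,N-1}^D ⊆ ℤ^D`. -/
def box (D N : ℕ) : Finset (Zd D) :=
  Fintype.piFinset fun _ => Finset.Ico (-(N : ℤ)) (N : ℤ)

open Classical in
/-- `#(J ∩ 𝔹(N)) / (2N)^D`. -/
def densSeq (D : ℕ) (J : Set (Zd D)) (N : ℕ) : ℝ :=
  ((box D N).filter (fun ℓ => ℓ ∈ J)).card / ((2 * N : ℕ) : ℝ) ^ D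

/-- The upper Cesàro density `d̄(J)` of `J ⊆ ℤ^D`. -/
def upperDens (D : ℕ) (J : Set (Zd D)) : ℝ :=
  Filter.limsup (densSeq D J) Filter.atTop

/-- The Besicovitch pseudometric `d_B` on `𝒜^{ℤ^D}`. -/
def dB {A : Type*} (D : ℕ) (p q : Zd D → A) : ℝ :=
  upperDens D {ℓ | p ℓ ≠ q ℓ}

variable {K D : ℕ} {A : Type*}

/-- An `𝒜`-labelled measurable partition of the torus: pairwise disjoint measurable
cells whose union has full measure. -/
structure IsMeasPartition (P : A → Set (Torus K)) : Prop where
  meas : ∀ a, MeasurableSet (P a)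
  disj : Pairwise (Function.onFun Disjoint P)
  full : volume (⋃ a, P a) = 1

/-- An `𝒜`-labelled open partition of the torus: pairwise disjoint open cells whose
union is dense and has full measure. -/
structure IsOpenPartition (P : A → Set (Torus K)) : Prop where
  isOpen : ∀ a, IsOpen (P a)
  disj : Pairwise (Function.onFun Disjoint P)
  dense : Dense (⋃ a, P a)
  full : volume (⋃ a, P a) = 1

/-- `lab` realizes the partition `P` as an `𝒜`-valued function (each cell is labelled
by its index). -/
def IsLabel (P : A → Set (Torus K)) (lab : Torus K → A) : Prop :=
  ∀ a, ∀ t ∈ P a, lab t = a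

/-- The symmetric-difference pseudometric `d_△(𝒫,𝒬) = Σ_a λ(P_a △ Q_a)`. -/
def dSym [Fintype A] (P Q : A → Set (Torus K)) : ℝ :=
  ∑ a, (volume (symmDiff (P a) (Q a))).toReal

/-- `𝕋̃(𝒫) = ⋂_ℓ σ^ℓ(P_*)`, where `σ^ℓ(t) = t + τ(ℓ)` and `P_* = ⋃_a P_a`. -/
def Ttil (τ : Zd D →+ Torus K) (P : A → Set (Torus K)) : Set (Torus K) :=
  ⋂ ℓ : Zd D, (fun x => x + τ ℓ) '' (⋃ a, P a)

/-- The trajectory map `𝒫_σ(t)_ℓ = 𝒫(σ^ℓ t)`, expressed via a labelling `lab` of `𝒫`. -/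
def traj (τ : Zd D →+ Torus K) (lab : Torus K → A) (t : Torus K) : Zd D → A :=
  fun ℓ => lab (t + τ ℓ)

/-- A partition is simple if `0` is its only translational symmetry. -/
def IsSimple (P : A → Set (Torus K)) : Prop :=
  ∀ s : Torus K, (∀ a, volume (symmDiff (P a) ((fun x => x + s) '' P a)) = 0) → s = 0

/-- The cellular automaton `Φ` with neighbourhood `B` and local rule `φ`:
`Φ(x)_ℓ = φ((x_{ℓ+b})_{b∈B})`. -/
def caMap {D : ℕ} {A : Type*} (B : Finset (Zd D)) (φ : (B → A) → A)
    (x : Zd D → A) : Zd D → A :=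
  fun ℓ => φ fun b => x (ℓ + (b : Zd D))

/-- The induced map `Φ̂` on partitions: `Q_a = ⋃_{c : φ(c)=a} ⋂_{b∈B} σ^{-b}(P_{c_b})`. -/
def inducedPart (τ : Zd D →+ Torus K) (B : Finset (Zd D)) (φ : (B → A) → A)
    (P : A → Set (Torus K)) : A → Set (Torus K) :=
  fun a => ⋃ (c : B → A) (_ : φ c = a), ⋂ b : B, {t | t + τ (b : Zd D) ∈ P (c b)}

/-- `x ∈ QS_σ`: `x` is a `σ`-quasisturmian sequence, i.e. the `𝒫`-trajectory of some
point of `𝕋̃(𝒫)` for some open partition `𝒫`. -/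
def IsQSSeq (τ : Zd D →+ Torus K) (x : Zd D → A) : Prop :=
  ∃ (P : A → Set (Torus K)) (lab : Torus K → A) (t : Torus K),
    IsOpenPartition P ∧ IsLabel P lab ∧ t ∈ Ttil τ P ∧ x = traj τ lab t

namespace SPaux

variable {K D : ℕ}

lemma measure_univ_torus (K : ℕ) : (volume : Measure (Torus K)) Set.univ = 1 := by
  rw [show (volume : Measure (Torus K)) = Measure.pi (fun _ => volume) from rfl,
    Measure.pi_univ]
  simp [AddCircle.measure_univ]

instance : IsProbabilityMeasure (volume : Measure (Torus K)) := ⟨measure_univ_torus K⟩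

open Pointwise in
lemma claimA (E : Set (Torus K)) (hE : MeasurableSet E)
    {ε : ℝ≥0∞} (hε : ε ≠ 0) (hε' : ε ≠ ⊤) :
    ∃ V ∈ 𝓝 (0 : Torus K), ∀ y ∈ V,
      volume (E \ ((· + y) ⁻¹' E)) < ε := by
  have hhalf : (ε / 2 : ℝ≥0∞) ≠ 0 := by
    simp [ENNReal.div_eq_zero_iff, hε]
  obtain ⟨U, hEU, hUopen, hU⟩ := E.exists_isOpen_lt_add (μ := volume) (measure_ne_top _ _) hhalf
  obtain ⟨C, hCE, hCcomp, hC⟩ := hE.exists_isCompact_lt_add (μ := volume) (measure_ne_top _ _) hhalf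
  have hCU : C ⊆ U := hCE.trans hEU
  obtain ⟨V₀, hV₀, hCV₀⟩ := compact_open_separated_add_right hCcomp hUopen hCU
  refine ⟨(fun y : Torus K => -y) ⁻¹' V₀, ?_, ?_⟩
  · exact ContinuousAt.preimage_mem_nhds continuous_neg.continuousAt (by simpa using hV₀)
  · intro y hy
    have hCy : (· + y) ⁻¹' C ⊆ U := by
      intro t ht
      have : (t + y) + (-y) ∈ C + V₀ := Set.add_mem_add ht hy
      simpa using hCV₀ this
    have hCym : MeasurableSet ((· + y) ⁻¹' C) :=
      hCcomp.measurableSet.preimage (measurable_add_const y)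
    have hsub : E \ ((· + y) ⁻¹' E) ⊆ U \ ((· + y) ⁻¹' C) := fun t ht =>
      ⟨hEU ht.1, fun hc => ht.2 (hCE hc)⟩
    have hUC : volume U < volume C + ε := by
      calc volume U < volume E + ε / 2 := hU
        _ < (volume C + ε / 2) + ε / 2 :=
          ENNReal.add_lt_add_right (by simp [ENNReal.div_eq_top, hε']) hC
        _ = volume C + ε := by rw [add_assoc, ENNReal.add_halves]
    calc volume (E \ ((· + y) ⁻¹' E)) ≤ volume (U \ ((· + y) ⁻¹' C)) :=
          measure_mono hsub
      _ = volume U - volume ((· + y) ⁻¹' C) :=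
          measure_diff hCy hCym.nullMeasurableSet (measure_ne_top _ _)
      _ = volume U - volume C := by rw [measure_preimage_add_right]
      _ < ε := by
          rw [ENNReal.sub_lt_iff_lt_right (measure_ne_top _ _)
            (measure_mono hCU)]
          rw [add_comm]; exact hUC

lemma dichotomy (τ : Zd D →+ Torus K) (hdense : DenseRange τ)
    (E : Set (Torus K)) (hE : MeasurableSet E)
    (hinv : ∀ ℓ, (· + τ ℓ) ⁻¹' E = E) :
    volume E = 0 ∨ volume E = 1 := by
  -- Step 1 : both difference sets are null for every translate
  have key : ∀ (y : Torus K) (ε : ℝ≥0∞), ε ≠ 0 → ε ≠ ⊤ →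
      volume (E \ ((· + y) ⁻¹' E)) + volume (((· + y) ⁻¹' E) \ E) < ε := by
    intro y ε hε hε'
    have hhalf0 : (ε / 2 : ℝ≥0∞) ≠ 0 := by simp [ENNReal.div_eq_zero_iff, hε]
    have hhalft : (ε / 2 : ℝ≥0∞) ≠ ⊤ := by simp [ENNReal.div_eq_top, hε']
    obtain ⟨V, hV, hVlt⟩ := claimA E hE hhalf0 hhalft
    set W : Set (Torus K) := V ∩ ((fun x => -x) ⁻¹' V) with hW
    have hWmem : W ∈ 𝓝 (0 : Torus K) := by
      refine Filter.inter_mem hV ?_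
      exact ContinuousAt.preimage_mem_nhds continuous_neg.continuousAt (by simpa using hV)
    -- find a lattice point close to y
    have hO : IsOpen ((fun x => y - x) ⁻¹' interior W) :=
      (isOpen_interior).preimage (continuous_const.sub continuous_id)
    have hyO : y ∈ (fun x => y - x) ⁻¹' interior W := by
      simp only [Set.mem_preimage, sub_self]
      exact mem_interior_iff_mem_nhds.2 hWmem
    obtain ⟨ℓ, hℓ⟩ := hdense.exists_mem_open hO ⟨y, hyO⟩
    set z : Torus K := y - τ ℓ with hz
    have hzW : z ∈ W := interior_subset hℓ
    have hzV : z ∈ V := hzW.1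
    have hznV : -z ∈ V := hzW.2
    -- translate by y equals translate by z
    have hTy : ((· + y) ⁻¹' E) = ((· + z) ⁻¹' E) := by
      ext t
      simp only [Set.mem_preimage]
      have h1 : t + y = (t + z) + τ ℓ := by
        rw [hz]; abel
      rw [h1, ← Set.mem_preimage (f := (· + τ ℓ)), hinv ℓ]
    have h2 : ((· + z) ⁻¹' E) \ E = (· + z) ⁻¹' (E \ ((· + -z) ⁻¹' E)) := by
      ext t
      simp only [Set.mem_preimage, Set.mem_diff, add_neg_cancel_right]
    have hlt1 : volume (E \ ((· + z) ⁻¹' E)) < ε / 2 := hVlt z hzV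
    have hlt2 : volume (((· + z) ⁻¹' E) \ E) < ε / 2 := by
      rw [h2, measure_preimage_add_right]
      exact hVlt (-z) hznV
    calc volume (E \ ((· + y) ⁻¹' E)) + volume (((· + y) ⁻¹' E) \ E)
        = volume (E \ ((· + z) ⁻¹' E)) + volume (((· + z) ⁻¹' E) \ E) := by rw [hTy]
      _ < ε / 2 + ε / 2 := ENNReal.add_lt_add hlt1 hlt2
      _ = ε := ENNReal.add_halves ε
  have hnull : ∀ y : Torus K,
      volume (E \ ((· + y) ⁻¹' E)) + volume (((· + y) ⁻¹' E) \ E) = 0 := by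
    intro y
    by_contra h
    have hfin : volume (E \ ((· + y) ⁻¹' E)) + volume (((· + y) ⁻¹' E) \ E) ≠ ⊤ := by
      exact ENNReal.add_ne_top.2 ⟨measure_ne_top _ _, measure_ne_top _ _⟩
    exact absurd (key y _ h hfin) (lt_irrefl _)
  -- Step 2 : intersections have full measure
  have step1 : ∀ y : Torus K, volume (E ∩ ((· + y) ⁻¹' E)) = volume E := by
    intro y
    have hm : MeasurableSet ((· + y) ⁻¹' E) := hE.preimage (measurable_add_const y)
    have h0 : volume (E \ ((· + y) ⁻¹' E)) = 0 :=
      le_antisymm (le_trans le_self_add (le_of_eq (hnull y))) zero_le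
    have := measure_inter_add_diff (μ := volume) E hm
    rwa [h0, add_zero] at this
  -- Step 3 : Fubini
  have hindm : Measurable (E.indicator (1 : Torus K → ℝ≥0∞)) :=
    measurable_const.indicator hE
  have h1 : ∀ y : Torus K, volume (E ∩ ((· + y) ⁻¹' E)) =
      ∫⁻ t, (E.indicator (1 : Torus K → ℝ≥0∞) t) *
        (E.indicator (1 : Torus K → ℝ≥0∞) (t + y)) ∂volume := by
    intro y
    rw [← lintegral_indicator_one (hE.inter (hE.preimage (measurable_add_const y)))]
    congr 1
    funext t
    by_cases ht : t ∈ E <;> by_cases hty : t + y ∈ E <;>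
      simp [Set.indicator_apply, ht, hty]
  have hswap : ∫⁻ y, volume (E ∩ ((· + y) ⁻¹' E)) ∂volume = volume E * volume E := by
    calc ∫⁻ y, volume (E ∩ ((· + y) ⁻¹' E)) ∂volume
        = ∫⁻ y, ∫⁻ t, (E.indicator (1 : Torus K → ℝ≥0∞) t) *
            (E.indicator (1 : Torus K → ℝ≥0∞) (t + y)) ∂volume ∂volume := by
          simp only [h1]
      _ = ∫⁻ t, ∫⁻ y, (E.indicator (1 : Torus K → ℝ≥0∞) t) *
            (E.indicator (1 : Torus K → ℝ≥0∞) (t + y)) ∂volume ∂volume := by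
          apply lintegral_lintegral_swap
          apply Measurable.aemeasurable
          exact (hindm.comp measurable_snd).mul
            (hindm.comp (measurable_snd.add measurable_fst))
      _ = ∫⁻ t, (E.indicator (1 : Torus K → ℝ≥0∞) t) * volume E ∂volume := by
          congr 1; funext t
          have hf : Measurable (fun y : Torus K => E.indicator (1 : Torus K → ℝ≥0∞) (t + y)) :=
            hindm.comp (measurable_const_add t)
          rw [lintegral_const_mul _ hf]
          congr 1
          have : ∀ y : Torus K, E.indicator (1 : Torus K → ℝ≥0∞) (t + y)
              = ((t + ·) ⁻¹' E).indicator (1 : Torus K → ℝ≥0∞) y := by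
            intro y; by_cases h : t + y ∈ E <;> simp [Set.indicator_apply, h]
          simp only [this]
          rw [lintegral_indicator_one (hE.preimage (measurable_const_add t))]
          exact measure_preimage_add volume t E
      _ = volume E * volume E := by
          rw [lintegral_mul_const _ hindm, lintegral_indicator_one hE, mul_comm]
  have hEE : volume E = volume E * volume E := by
    rw [← hswap]
    simp only [step1]
    rw [lintegral_const, measure_univ, mul_one]
  rcases eq_or_ne (volume E) 0 with h0 | h0
  · exact Or.inl h0
  · right
    have h1 : volume E * 1 = volume E * volume E := by rw [mul_one]; exact hEE
    exact ((ENNReal.mul_left_strictMono h0 (measure_ne_top _ _)).injective (by rw [mul_comm 1]; exact h1)).symm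

end SPaux

open Pointwise in
lemma SPaux.image_eq_preimage {K : ℕ} (c : Torus K) (S : Set (Torus K)) :
    (fun x => x + c) '' S = (fun x => x + -c) ⁻¹' S := by
  ext x
  simp only [Set.mem_image, Set.mem_preimage]
  constructor
  · rintro ⟨p, hp, rfl⟩; simpa using hp
  · intro h; exact ⟨x + -c, h, by simp⟩


/-- If `𝒫` is a simple measurable partition then the trajectory map is
injective modulo null sets: for every `s ≠ 0`, for `λ`-a.e. `t`, if `t` and `t+s` both
lie in `𝕋̃(𝒫)` then `𝒫_σ(t) ≠ 𝒫_σ(t+s)`. -/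
theorem simple_partition_traj_injective_ae {K D : ℕ} (hK : 1 ≤ K) (hD : 1 ≤ D)
    {A : Type*} [Fintype A]
    (τ : Zd D →+ Torus K) (hinj : Function.Injective τ) (hdense : DenseRange τ)
    (P : A → Set (Torus K)) (hP : IsMeasPartition P) (hsimple : IsSimple P)
    (lab : Torus K → A) (hlab : IsLabel P lab)
    (s : Torus K) (hs : s ≠ 0) :
    ∀ᵐ t ∂(volume : Measure (Torus K)),
      t ∈ Ttil τ P → t + s ∈ Ttil τ P →
        ∃ ℓ : Zd D, lab (t + τ ℓ) ≠ lab (t + τ ℓ + s) := by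
  classical
  -- characterization of membership in `Ttil`
  have hT : ∀ t : Torus K, t ∈ Ttil τ P ↔ ∀ ℓ : Zd D, t + τ ℓ ∈ ⋃ a, P a := by
    intro t
    constructor
    · intro ht ℓ
      have h := Set.mem_iInter.1 ht (-ℓ)
      rw [SPaux.image_eq_preimage] at h
      rw [map_neg, neg_neg] at h
      exact h
    · intro h
      refine Set.mem_iInter.2 fun ℓ' => ?_
      rw [SPaux.image_eq_preimage]
      rw [Set.mem_preimage, ← map_neg]
      exact h (-ℓ')
  -- the bad set
  set E : Set (Torus K) := (Ttil τ P ∩ ((· + s) ⁻¹' Ttil τ P)) ∩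
      ⋂ ℓ : Zd D, ⋃ a : A,
        ((fun t => t + τ ℓ) ⁻¹' P a ∩ (fun t => t + τ ℓ + s) ⁻¹' P a) with hEdef
  have hmem : ∀ t : Torus K, t ∈ E ↔
      t ∈ Ttil τ P ∧ t + s ∈ Ttil τ P ∧
        ∀ ℓ : Zd D, ∃ a : A, t + τ ℓ ∈ P a ∧ t + τ ℓ + s ∈ P a := by
    intro t
    simp only [hEdef, Set.mem_inter_iff, Set.mem_iInter, Set.mem_iUnion, Set.mem_preimage,
      and_assoc]
  -- measurability
  have hTm : MeasurableSet (Ttil τ P) := by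
    refine MeasurableSet.iInter fun ℓ => ?_
    rw [SPaux.image_eq_preimage]
    exact (MeasurableSet.iUnion fun a => hP.meas a).preimage (measurable_add_const _)
  have hEm : MeasurableSet E := by
    refine ((hTm.inter (hTm.preimage (measurable_add_const s))).inter ?_)
    refine MeasurableSet.iInter fun ℓ => MeasurableSet.iUnion fun a => ?_
    exact ((hP.meas a).preimage (measurable_add_const (τ ℓ))).inter
      ((hP.meas a).preimage ((measurable_add_const s).comp (measurable_add_const (τ ℓ))))
  -- invariance of Ttil
  have hTinv : ∀ (ℓ₀ : Zd D) (t : Torus K), t + τ ℓ₀ ∈ Ttil τ P ↔ t ∈ Ttil τ P := by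
    intro ℓ₀ t
    rw [hT, hT]
    constructor
    · intro h ℓ
      have h' := h (ℓ - ℓ₀)
      rwa [map_sub, show t + τ ℓ₀ + (τ ℓ - τ ℓ₀) = t + τ ℓ by abel] at h'
    · intro h ℓ
      have h' := h (ℓ₀ + ℓ)
      rwa [map_add, ← add_assoc] at h'
  -- invariance of E
  have hinv : ∀ ℓ₀ : Zd D, (· + τ ℓ₀) ⁻¹' E = E := by
    intro ℓ₀
    ext t
    rw [Set.mem_preimage, hmem, hmem]
    constructor
    · rintro ⟨h1, h2, h3⟩
      refine ⟨(hTinv ℓ₀ t).1 h1, ?_, fun ℓ => ?_⟩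
      · rw [show t + τ ℓ₀ + s = (t + s) + τ ℓ₀ by abel] at h2
        exact (hTinv ℓ₀ (t + s)).1 h2
      · obtain ⟨a, ha1, ha2⟩ := h3 (ℓ - ℓ₀)
        rw [map_sub, show t + τ ℓ₀ + (τ ℓ - τ ℓ₀) = t + τ ℓ by abel] at ha1 ha2
        exact ⟨a, ha1, ha2⟩
    · rintro ⟨h1, h2, h3⟩
      refine ⟨(hTinv ℓ₀ t).2 h1, ?_, fun ℓ => ?_⟩
      · rw [show t + τ ℓ₀ + s = (t + s) + τ ℓ₀ by abel]
        exact (hTinv ℓ₀ (t + s)).2 h2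
      · obtain ⟨a, ha1, ha2⟩ := h3 (ℓ₀ + ℓ)
        rw [map_add, show t + (τ ℓ₀ + τ ℓ) = t + τ ℓ₀ + τ ℓ by abel] at ha1 ha2
        exact ⟨a, ha1, ha2⟩
  -- dichotomy
  rcases SPaux.dichotomy τ hdense E hEm hinv with h0 | h1
  · -- E is null : conclude
    have hae : ∀ᵐ t ∂(volume : Measure (Torus K)), t ∉ E :=
      measure_eq_zero_iff_ae_notMem.mp h0
    filter_upwards [hae] with t ht hTt hTs
    by_contra hcon
    push_neg at hcon
    apply ht
    rw [hmem]
    refine ⟨hTt, hTs, fun ℓ => ?_⟩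
    obtain ⟨a, ha⟩ := Set.mem_iUnion.1 ((hT t).1 hTt ℓ)
    obtain ⟨b, hb⟩ := Set.mem_iUnion.1 ((hT (t + s)).1 hTs ℓ)
    rw [show t + s + τ ℓ = t + τ ℓ + s by abel] at hb
    have hab : a = b := by
      rw [← hlab a _ ha, ← hlab b _ hb]
      exact hcon ℓ
    exact ⟨a, ha, hab ▸ hb⟩
  · -- E has full measure : contradiction with simplicity
    exfalso
    apply hs
    apply hsimple s
    intro a
    have hEc : volume Eᶜ = 0 := by
      rw [measure_compl hEm (measure_ne_top _ _), h1, measure_univ, tsub_self]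
    -- the set Q = P a translated by s
    set Q : Set (Torus K) := (fun x => x + -s) ⁻¹' P a with hQdef
    have hQm : MeasurableSet Q := (hP.meas a).preimage (measurable_add_const (-s))
    have hQvol : volume Q = volume (P a) := measure_preimage_add_right volume (-s) (P a)
    have hdiff1 : volume (P a \ ((fun x => x + s) ⁻¹' P a)) = 0 := by
      refine measure_mono_null ?_ hEc
      rintro t ⟨ht1, ht2⟩
      intro htE
      obtain ⟨-, -, h3⟩ := (hmem t).1 htE
      obtain ⟨b, hb1, hb2⟩ := h3 0
      rw [map_zero, add_zero] at hb1 hb2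
      have hba : b = a := by
        by_contra hba
        exact Set.disjoint_left.mp (hP.disj hba) hb1 ht1
      exact ht2 (hba ▸ hb2)
    have hdiff2 : volume (Q \ P a) = 0 := by
      have heq : Q \ P a = (fun x => x + -s) ⁻¹' (P a \ ((fun x => x + s) ⁻¹' P a)) := by
        ext t
        simp only [hQdef, Set.mem_diff, Set.mem_preimage, neg_add_cancel_right]
      rw [heq, measure_preimage_add_right]
      exact hdiff1
    have hdiff3 : volume (P a \ Q) = 0 := by
      have e1 : volume (P a ∩ Q) + volume (P a \ Q) = volume (P a) :=
        measure_inter_add_diff (P a) hQm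
      have e2 : volume (Q ∩ P a) + volume (Q \ P a) = volume Q :=
        measure_inter_add_diff Q (hP.meas a)
      rw [hdiff2, add_zero, hQvol, Set.inter_comm] at e2
      rw [e2] at e1
      exact (ENNReal.add_right_inj (measure_ne_top _ _)).mp (by rw [add_zero]; exact e1)
    have hQ : (fun x => x + s) '' P a = Q := by
      rw [hQdef, SPaux.image_eq_preimage]
    rw [hQ, Set.symmDiff_def]
    exact measure_union_null hdiff3 hdiff2

end
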